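/- Let Γ_* be the graph on vertices {1,…,d} with an edge between j and k if and only if ρ_*^{(jk)} ≠ 0, where ρ_* is any symmetric measure of marginal association dominating maximal correlation, in the sense that ρ_*^{(jk)} = 0 implies ρ_m^{(jk)} = 0 for all j ≠ k. If j belongs to a connected component of Γ_* with vertex set C and k ∉ C, then every minimizer f = (f_jl)_{l≠j} of the additive least-squares criterion R_j satisfies Σ_{l∉C} f_jl(x_l) = 0 almost surely, and there exists a minimizer whose component for variable k is identically zero. -/

import Mathlib

open MeasureTheory
open scoped ProbabilityTheory Classical

/-- The correlation between two real random variables u and v. -/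
noncomputable def corrRV {Ω : Type*} [MeasureSpace Ω] (u v : Ω → ℝ) : ℝ :=
  (∫ ω, (u ω - ∫ ω', u ω') * (v ω - ∫ ω', v ω')) /
    (Real.sqrt (∫ ω, (u ω - ∫ ω', u ω') ^ 2) *
      Real.sqrt (∫ ω, (v ω - ∫ ω', v ω') ^ 2))

/-- The maximal correlation ρ_m between x_k and x_j: the supremum of
Corr(f(x_k), g(x_j)) over measurable f, g : ℝ → ℝ such that f(x_k) and g(x_j)
are square-integrable with nonzero variance. -/
noncomputable def maxCorr {Ω : Type*} [MeasureSpace Ω] (xk xj : Ω → ℝ) : ℝ :=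
  sSup {c : ℝ | ∃ f g : ℝ → ℝ, Measurable f ∧ Measurable g ∧
    MemLp (fun ω => f (xk ω)) 2 ℙ ∧ MemLp (fun ω => g (xj ω)) 2 ℙ ∧
    (∫ ω, (f (xk ω) - ∫ ω', f (xk ω')) ^ 2) ≠ 0 ∧
    (∫ ω, (g (xj ω) - ∫ ω', g (xj ω')) ^ 2) ≠ 0 ∧
    c = corrRV (fun ω => f (xk ω)) (fun ω => g (xj ω))}

/-- A tuple f = (f_l)_{l≠j} is admissible for node j if each f_l is measurable
with f_l(x_l) square-integrable and mean zero. -/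
def Admissible {Ω : Type*} [MeasureSpace Ω] {d : ℕ}
    (x : Fin d → Ω → ℝ) (j : Fin d) (f : Fin d → ℝ → ℝ) : Prop :=
  ∀ l, l ≠ j → Measurable (f l) ∧ MemLp (fun ω => f l (x l ω)) 2 ℙ ∧
    (∫ ω, f l (x l ω)) = 0

/-- The additive least-squares criterion R_j(f) = E|x_j − Σ_{l≠j} f_l(x_l)|². -/
noncomputable def addLSRisk {Ω : Type*} [MeasureSpace Ω] {d : ℕ}
    (x : Fin d → Ω → ℝ) (j : Fin d) (f : Fin d → ℝ → ℝ) : ℝ :=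
  ∫ ω, (x j ω - ∑ l ∈ Finset.univ.erase j, f l (x l ω)) ^ 2

/-- A minimizer of R_j over admissible tuples. -/
def IsAddLSMinimizer {Ω : Type*} [MeasureSpace Ω] {d : ℕ}
    (x : Fin d → Ω → ℝ) (j : Fin d) (f : Fin d → ℝ → ℝ) : Prop :=
  Admissible x j f ∧ ∀ g, Admissible x j g → addLSRisk x j f ≤ addLSRisk x j g

section AuxLemmas

variable {Ω : Type*} [MeasureSpace Ω]

lemma mul_integrable_of_memL2' {u v : Ω → ℝ} (hu : MemLp u 2 ℙ) (hv : MemLp v 2 ℙ) :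
    Integrable (fun ω => u ω * v ω) ℙ := by
  have h : MemLp (u • v) 1 ℙ := hv.smul hu
  rw [memLp_one_iff_integrable] at h
  exact h

lemma abs_integral_mul_le' {u v : Ω → ℝ} (hu : MemLp u 2 ℙ) (hv : MemLp v 2 ℙ) :
    |∫ ω, u ω * v ω| ≤ Real.sqrt (∫ ω, u ω ^ 2) * Real.sqrt (∫ ω, v ω ^ 2) := by
  have hconj : Real.HolderConjugate 2 2 := Real.HolderConjugate.two_two
  have h2 : (ENNReal.ofReal (2:ℝ)) = 2 := by norm_num
  have hu' : MemLp (fun ω => |u ω|) (ENNReal.ofReal (2:ℝ)) ℙ := by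
    rw [h2]; simpa [Real.norm_eq_abs] using hu.norm
  have hv' : MemLp (fun ω => |v ω|) (ENNReal.ofReal (2:ℝ)) ℙ := by
    rw [h2]; simpa [Real.norm_eq_abs] using hv.norm
  have h := integral_mul_le_Lp_mul_Lq_of_nonneg (μ := (ℙ : Measure Ω)) hconj
    (Filter.Eventually.of_forall fun ω => abs_nonneg (u ω))
    (Filter.Eventually.of_forall fun ω => abs_nonneg (v ω)) hu' hv'
  have e1 : (∫ ω, |u ω| ^ (2:ℝ)) = ∫ ω, u ω ^ 2 := by
    congr 1; funext ω
    rw [show ((2:ℝ) = ((2:ℕ):ℝ)) by norm_num, Real.rpow_natCast, sq_abs]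
  have e2 : (∫ ω, |v ω| ^ (2:ℝ)) = ∫ ω, v ω ^ 2 := by
    congr 1; funext ω
    rw [show ((2:ℝ) = ((2:ℕ):ℝ)) by norm_num, Real.rpow_natCast, sq_abs]
  calc |∫ ω, u ω * v ω| ≤ ∫ ω, |u ω| * |v ω| := by
        simpa [Real.norm_eq_abs, abs_mul] using
          norm_integral_le_integral_norm (μ := (ℙ : Measure Ω)) (fun ω => u ω * v ω)
    _ ≤ (∫ ω, |u ω| ^ (2:ℝ)) ^ (1/(2:ℝ)) * (∫ ω, |v ω| ^ (2:ℝ)) ^ (1/(2:ℝ)) := h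
    _ = Real.sqrt (∫ ω, u ω ^ 2) * Real.sqrt (∫ ω, v ω ^ 2) := by
        rw [e1, e2, ← Real.sqrt_eq_rpow, ← Real.sqrt_eq_rpow]

lemma ae_zero_of_integral_sq_zero' {u : Ω → ℝ} (hu : MemLp u 2 ℙ)
    (h : (∫ ω, u ω ^ 2) = 0) : u =ᵐ[(ℙ : Measure Ω)] 0 := by
  have hint : Integrable (fun ω => u ω ^ 2) ℙ := hu.integrable_sq
  have := (integral_eq_zero_iff_of_nonneg (fun ω => sq_nonneg (u ω)) hint).mp h
  filter_upwards [this] with ω hω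
  simpa [pow_eq_zero_iff] using hω

variable [IsProbabilityMeasure (ℙ : Measure Ω)]

lemma corrRV_le_one' {u v : Ω → ℝ} (hu : MemLp u 2 ℙ) (hv : MemLp v 2 ℙ)
    (hu' : (∫ ω, (u ω - ∫ ω', u ω') ^ 2) ≠ 0)
    (hv' : (∫ ω, (v ω - ∫ ω', v ω') ^ 2) ≠ 0) :
    corrRV u v ≤ 1 := by
  set uc : Ω → ℝ := fun ω => u ω - ∫ ω', u ω' with huc
  set vc : Ω → ℝ := fun ω => v ω - ∫ ω', v ω' with hvc
  have hucL : MemLp uc 2 ℙ := hu.sub (memLp_const _)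
  have hvcL : MemLp vc 2 ℙ := hv.sub (memLp_const _)
  have hA : (0:ℝ) < ∫ ω, uc ω ^ 2 :=
    lt_of_le_of_ne (integral_nonneg fun ω => sq_nonneg _) (Ne.symm hu')
  have hB : (0:ℝ) < ∫ ω, vc ω ^ 2 :=
    lt_of_le_of_ne (integral_nonneg fun ω => sq_nonneg _) (Ne.symm hv')
  have hD : (0:ℝ) < Real.sqrt (∫ ω, uc ω ^ 2) * Real.sqrt (∫ ω, vc ω ^ 2) :=
    mul_pos (Real.sqrt_pos.mpr hA) (Real.sqrt_pos.mpr hB)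
  have hcs := abs_integral_mul_le' hucL hvcL
  rw [corrRV, div_le_one hD]
  exact le_trans (le_abs_self _) hcs

/-- If the maximal correlation between `xa` and `xb` vanishes, then any two
mean-zero square-integrable transformations of `xa` and `xb` are uncorrelated. -/
lemma integral_mul_eq_zero_of_maxCorr_zero' {xa xb : Ω → ℝ}
    (hm : maxCorr xa xb = 0)
    {f g : ℝ → ℝ} (hf : Measurable f) (hg : Measurable g)
    (hfL : MemLp (fun ω => f (xa ω)) 2 ℙ) (hgL : MemLp (fun ω => g (xb ω)) 2 ℙ)
    (hfm : (∫ ω, f (xa ω)) = 0) (hgm : (∫ ω, g (xb ω)) = 0) :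
    (∫ ω, f (xa ω) * g (xb ω)) = 0 := by
  rw [maxCorr] at hm
  set S := {c : ℝ | ∃ f g : ℝ → ℝ, Measurable f ∧ Measurable g ∧
      MemLp (fun ω => f (xa ω)) 2 ℙ ∧ MemLp (fun ω => g (xb ω)) 2 ℙ ∧
      (∫ ω, (f (xa ω) - ∫ ω', f (xa ω')) ^ 2) ≠ 0 ∧
      (∫ ω, (g (xb ω) - ∫ ω', g (xb ω')) ^ 2) ≠ 0 ∧
      c = corrRV (fun ω => f (xa ω)) (fun ω => g (xb ω))} with hS
  have hbdd : BddAbove S := by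
    refine ⟨1, fun c hc => ?_⟩
    obtain ⟨f', g', _, _, hf'L, hg'L, hA, hB, rfl⟩ := hc
    exact corrRV_le_one' hf'L hg'L hA hB
  by_cases hA : (∫ ω, (f (xa ω)) ^ 2) = 0
  · have h0 : (fun ω => f (xa ω)) =ᵐ[(ℙ : Measure Ω)] 0 := ae_zero_of_integral_sq_zero' hfL hA
    have : (fun ω => f (xa ω) * g (xb ω)) =ᵐ[(ℙ : Measure Ω)] 0 := by
      filter_upwards [h0] with ω hω; simp [hω]
    rw [integral_congr_ae this]; simp
  by_cases hB : (∫ ω, (g (xb ω)) ^ 2) = 0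
  · have h0 : (fun ω => g (xb ω)) =ᵐ[(ℙ : Measure Ω)] 0 := ae_zero_of_integral_sq_zero' hgL hB
    have : (fun ω => f (xa ω) * g (xb ω)) =ᵐ[(ℙ : Measure Ω)] 0 := by
      filter_upwards [h0] with ω hω; simp [hω]
    rw [integral_congr_ae this]; simp
  · have hA' : (∫ ω, (f (xa ω) - ∫ ω', f (xa ω')) ^ 2) ≠ 0 := by
      simpa [hfm] using hA
    have hB' : (∫ ω, (g (xb ω) - ∫ ω', g (xb ω')) ^ 2) ≠ 0 := by
      simpa [hgm] using hB
    set c := corrRV (fun ω => f (xa ω)) (fun ω => g (xb ω)) with hc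
    have hmem : c ∈ S := ⟨f, g, hf, hg, hfL, hgL, hA', hB', rfl⟩
    have hnegmem : -c ∈ S := by
      refine ⟨fun t => -(f t), g, hf.neg, hg, hfL.neg, hgL, ?_, hB', ?_⟩
      · have : (∫ ω', -(f (xa ω'))) = 0 := by rw [integral_neg, hfm, neg_zero]
        simpa [this, hfm, neg_sq] using hA
      · rw [hc, corrRV, corrRV]
        have h1 : (∫ ω', -(f (xa ω'))) = 0 := by rw [integral_neg, hfm, neg_zero]
        rw [h1, hfm]
        simp only [sub_zero]
        rw [show (∫ ω, -(f (xa ω)) * (g (xb ω) - ∫ ω', g (xb ω'))) =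
            -(∫ ω, f (xa ω) * (g (xb ω) - ∫ ω', g (xb ω'))) by
          rw [← integral_neg]; congr 1; funext ω; ring]
        rw [show (∫ ω, (-(f (xa ω))) ^ 2) = ∫ ω, (f (xa ω)) ^ 2 by
          congr 1; funext ω; ring]
        rw [neg_div]
    have h1 : c ≤ 0 := hm ▸ le_csSup hbdd hmem
    have h2 : -c ≤ 0 := hm ▸ le_csSup hbdd hnegmem
    have hc0 : c = 0 := le_antisymm h1 (by linarith)
    rw [hc, corrRV, hfm, hgm] at hc0
    simp only [sub_zero] at hc0
    have hApos : (0:ℝ) < ∫ ω, (f (xa ω)) ^ 2 :=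
      lt_of_le_of_ne (integral_nonneg fun ω => sq_nonneg _) (Ne.symm hA)
    have hBpos : (0:ℝ) < ∫ ω, (g (xb ω)) ^ 2 :=
      lt_of_le_of_ne (integral_nonneg fun ω => sq_nonneg _) (Ne.symm hB)
    have hD : (0:ℝ) < Real.sqrt (∫ ω, (f (xa ω)) ^ 2) * Real.sqrt (∫ ω, (g (xb ω)) ^ 2) :=
      mul_pos (Real.sqrt_pos.mpr hApos) (Real.sqrt_pos.mpr hBpos)
    exact (div_eq_zero_iff.mp hc0).resolve_right (ne_of_gt hD)

end AuxLemmas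

section Core

variable {Ω : Type*} [MeasureSpace Ω] [IsProbabilityMeasure (ℙ : Measure Ω)] {d : ℕ}

/-- Core argument: if `maxCorr (x a) (x b) = 0` for all `a ∈ C`, `b ∉ C`, and `j ∈ C`,
then for any minimizer `f` of `R_j`, the part of the additive fit built from
variables outside `C` vanishes a.s., and truncating `f` to `C` gives a minimizer. -/
lemma screening_core (x : Fin d → Ω → ℝ)
    (hx_meas : ∀ i, Measurable (x i))
    (hx_L2 : ∀ i, MemLp (x i) 2 ℙ)
    (hx_mean : ∀ i, (∫ ω, x i ω) = 0)
    (j : Fin d) (C : Set (Fin d)) (hjC : j ∈ C)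
    (hmc : ∀ a ∈ C, ∀ b, b ∉ C → maxCorr (x a) (x b) = 0)
    (f : Fin d → ℝ → ℝ) (hf : IsAddLSMinimizer x j f) :
    ((fun ω => ∑ l ∈ Finset.univ.filter (fun l => l ∉ C), f l (x l ω))
        =ᵐ[(ℙ : Measure Ω)] 0)
      ∧ IsAddLSMinimizer x j (fun l => if l ∈ C then f l else 0) := by
  obtain ⟨hadm, hmin⟩ := hf
  set Cin : Finset (Fin d) := (Finset.univ.erase j).filter (fun l => l ∈ C) with hCin
  set Cout : Finset (Fin d) := Finset.univ.filter (fun l => l ∉ C) with hCout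
  have hCout' : (Finset.univ.erase j).filter (fun l => l ∉ C) = Cout := by
    apply Finset.ext
    intro l
    simp only [hCout, Finset.mem_filter, Finset.mem_erase, Finset.mem_univ, true_and, and_true]
    exact ⟨fun h => h.2, fun h => ⟨fun e => h (e ▸ hjC), h⟩⟩
  have hCout_ne : ∀ l ∈ Cout, l ≠ j := by
    intro l hl
    simp only [hCout, Finset.mem_filter, Finset.mem_univ, true_and] at hl
    exact fun e => hl (e ▸ hjC)
  have hCout_mem : ∀ l ∈ Cout, l ∉ C := by
    intro l hl
    simp only [hCout, Finset.mem_filter, Finset.mem_univ, true_and] at hl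
    exact hl
  have hCin_ne : ∀ l ∈ Cin, l ≠ j := fun l hl =>
    (Finset.mem_erase.mp (Finset.mem_filter.mp hl).1).1
  have hCin_mem : ∀ l ∈ Cin, l ∈ C := fun l hl => (Finset.mem_filter.mp hl).2
  set S : Ω → ℝ := fun ω => ∑ l ∈ Cin, f l (x l ω) with hSdef
  set T : Ω → ℝ := fun ω => ∑ l ∈ Cout, f l (x l ω) with hTdef
  have h_split : ∀ ω, (∑ l ∈ Finset.univ.erase j, f l (x l ω)) = S ω + T ω := by
    intro ω
    rw [hSdef, hTdef, ← hCout',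
      ← Finset.sum_filter_add_sum_filter_not (Finset.univ.erase j) (fun l => l ∈ C)]
  have hS2 : MemLp S 2 ℙ := by
    have := memLp_finset_sum' Cin (fun l hl => (hadm l (hCin_ne l hl)).2.1)
    simpa [Finset.sum_fn] using this
  have hT2 : MemLp T 2 ℙ := by
    have := memLp_finset_sum' Cout (fun l hl => (hadm l (hCout_ne l hl)).2.1)
    simpa [Finset.sum_fn] using this
  set U : Ω → ℝ := fun ω => x j ω - S ω with hUdef
  have hU2 : MemLp U 2 ℙ := (hx_L2 j).sub hS2
  -- cross term vanishes
  have hxT : (∫ ω, x j ω * T ω) = 0 := by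
    have : (fun ω => x j ω * T ω) = fun ω => ∑ m ∈ Cout, x j ω * f m (x m ω) := by
      funext ω; rw [hTdef, Finset.mul_sum]
    rw [this, integral_finset_sum _ (fun m hm =>
      mul_integrable_of_memL2' (hx_L2 j) (hadm m (hCout_ne m hm)).2.1)]
    refine Finset.sum_eq_zero fun m hm => ?_
    exact integral_mul_eq_zero_of_maxCorr_zero' (hmc j hjC m (hCout_mem m hm))
      measurable_id (hadm m (hCout_ne m hm)).1 (hx_L2 j) (hadm m (hCout_ne m hm)).2.1
      (hx_mean j) (hadm m (hCout_ne m hm)).2.2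
  have hST : (∫ ω, S ω * T ω) = 0 := by
    have : (fun ω => S ω * T ω) = fun ω => ∑ l ∈ Cin, f l (x l ω) * T ω := by
      funext ω; rw [hSdef, Finset.sum_mul]
    rw [this, integral_finset_sum _ (fun l hl =>
      mul_integrable_of_memL2' (hadm l (hCin_ne l hl)).2.1 hT2)]
    refine Finset.sum_eq_zero fun l hl => ?_
    have : (fun ω => f l (x l ω) * T ω) = fun ω => ∑ m ∈ Cout, f l (x l ω) * f m (x m ω) := by
      funext ω; rw [hTdef, Finset.mul_sum]
    rw [this, integral_finset_sum _ (fun m hm =>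
      mul_integrable_of_memL2' (hadm l (hCin_ne l hl)).2.1 (hadm m (hCout_ne m hm)).2.1)]
    refine Finset.sum_eq_zero fun m hm => ?_
    exact integral_mul_eq_zero_of_maxCorr_zero' (hmc l (hCin_mem l hl) m (hCout_mem m hm))
      (hadm l (hCin_ne l hl)).1 (hadm m (hCout_ne m hm)).1
      (hadm l (hCin_ne l hl)).2.1 (hadm m (hCout_ne m hm)).2.1
      (hadm l (hCin_ne l hl)).2.2 (hadm m (hCout_ne m hm)).2.2
  have hUT : (∫ ω, U ω * T ω) = 0 := by
    have e : (fun ω => U ω * T ω) = fun ω => x j ω * T ω - S ω * T ω := by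
      funext ω; rw [hUdef]; ring
    rw [e, integral_sub (mul_integrable_of_memL2' (hx_L2 j) hT2)
      (mul_integrable_of_memL2' hS2 hT2), hxT, hST, sub_zero]
  -- risk decomposition
  have iU2 : Integrable (fun ω => U ω ^ 2) ℙ := hU2.integrable_sq
  have iUT : Integrable (fun ω => U ω * T ω) ℙ := mul_integrable_of_memL2' hU2 hT2
  have iT2 : Integrable (fun ω => T ω ^ 2) ℙ := hT2.integrable_sq
  have hrisk_f : addLSRisk x j f = (∫ ω, U ω ^ 2) + (∫ ω, T ω ^ 2) := by
    have e : addLSRisk x j f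
        = ∫ ω, (U ω ^ 2 - 2 * (U ω * T ω) + T ω ^ 2) := by
      rw [addLSRisk]
      congr 1; funext ω
      rw [h_split ω, hUdef]; ring
    have iSub : Integrable (fun ω => U ω ^ 2 - 2 * (U ω * T ω)) ℙ := by
      exact iU2.sub (iUT.const_mul 2)
    rw [e, integral_add iSub iT2, integral_sub iU2 (iUT.const_mul 2),
      integral_const_mul, hUT]
    ring
  -- truncated tuple
  set g : Fin d → ℝ → ℝ := fun l => if l ∈ C then f l else 0 with hgdef
  have hgadm : Admissible x j g := by
    intro l hl
    by_cases hlC : l ∈ C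
    · have : g l = f l := by rw [hgdef]; simp [hlC]
      rw [this]; exact hadm l hl
    · have : g l = 0 := by rw [hgdef]; simp [hlC]
      rw [this]
      refine ⟨measurable_const, ?_, by simp⟩
      simpa using memLp_const (μ := (ℙ : Measure Ω)) (0:ℝ)
  have hgsum : ∀ ω, (∑ l ∈ Finset.univ.erase j, g l (x l ω)) = S ω := by
    intro ω
    rw [← Finset.sum_filter_add_sum_filter_not (Finset.univ.erase j) (fun l => l ∈ C),
      hCout']
    have e1 : (∑ l ∈ (Finset.univ.erase j).filter (fun l => l ∈ C), g l (x l ω)) = S ω := by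
      rw [hSdef]
      refine Finset.sum_congr rfl fun l hl => ?_
      rw [hgdef]; simp [hCin_mem l hl]
    have e2 : (∑ l ∈ Cout, g l (x l ω)) = 0 := by
      refine Finset.sum_eq_zero fun l hl => ?_
      rw [hgdef]; simp [hCout_mem l hl]
    rw [e1, e2, add_zero]
  have hrisk_g : addLSRisk x j g = ∫ ω, U ω ^ 2 := by
    rw [addLSRisk]
    congr 1; funext ω
    rw [hgsum ω, hUdef]
  -- minimality forces ∫ T² ≤ 0
  have hle := hmin g hgadm
  rw [hrisk_f, hrisk_g] at hle
  have hT2nonneg : (0:ℝ) ≤ ∫ ω, T ω ^ 2 := integral_nonneg fun ω => sq_nonneg _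
  have hT2zero : (∫ ω, T ω ^ 2) = 0 := le_antisymm (by linarith) hT2nonneg
  have hTae : T =ᵐ[(ℙ : Measure Ω)] 0 := ae_zero_of_integral_sq_zero' hT2 hT2zero
  constructor
  · exact hTae
  · refine ⟨hgadm, fun h hh => ?_⟩
    have : addLSRisk x j g = addLSRisk x j f := by
      rw [hrisk_f, hrisk_g, hT2zero, add_zero]
    rw [this]
    exact hmin h hh

end Core

/-- **Screening with a general measure of marginal association (Theorem 2,
extended version).** Let ρ_* be any symmetric measure of marginal association
dominating maximal correlation (ρ_*^{(jk)} = 0 ⟹ ρ_m^{(jk)} = 0) and let Γ_* be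
the graph with an edge between j and k iff ρ_*^{(jk)} ≠ 0.  If j belongs to a
connected component of Γ_* with vertex set C and k ∉ C, then every minimizer f
of R_j satisfies Σ_{l∉C} f_l(x_l) = 0 a.s., and (provided a minimizer exists)
there is a minimizer whose component for variable k is identically zero. -/
theorem connected_component_screening_general_association
    {Ω : Type*} [MeasureSpace Ω] [IsProbabilityMeasure (ℙ : Measure Ω)]
    {d : ℕ} (x : Fin d → Ω → ℝ)
    (hx_meas : ∀ i, Measurable (x i))
    (hx_L2 : ∀ i, MemLp (x i) 2 ℙ)
    (hx_mean : ∀ i, (∫ ω, x i ω) = 0)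
    (ρstar : Fin d → Fin d → ℝ)
    (hsymm : ∀ a b, ρstar a b = ρstar b a)
    (hdom : ∀ a b, a ≠ b → ρstar a b = 0 → maxCorr (x a) (x b) = 0)
    (j k : Fin d)
    (C : Set (Fin d))
    (hC : C = {l | (SimpleGraph.fromRel (fun a b => ρstar a b ≠ 0)).Reachable j l})
    (hk : k ∉ C) :
    (∀ f : Fin d → ℝ → ℝ, IsAddLSMinimizer x j f →
      ∀ᵐ ω ∂(ℙ : Measure Ω),
        (∑ l ∈ Finset.univ.filter (fun l => l ∉ C), f l (x l ω)) = 0)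
    ∧ ((∃ f, IsAddLSMinimizer x j f) →
        ∃ f, IsAddLSMinimizer x j f ∧ f k = fun _ => 0) := by
  have hjC : j ∈ C := by
    rw [hC]; exact SimpleGraph.Reachable.refl j
  have hmc : ∀ a ∈ C, ∀ b, b ∉ C → maxCorr (x a) (x b) = 0 := by
    intro a ha b hb
    have hab : a ≠ b := fun h => hb (h ▸ ha)
    refine hdom a b hab ?_
    by_contra hρ
    apply hb
    rw [hC] at ha ⊢
    exact ha.trans (SimpleGraph.Adj.reachable
      ((SimpleGraph.fromRel_adj _ _ _).mpr ⟨hab, Or.inl hρ⟩))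
  constructor
  · intro f hf
    have := (screening_core x hx_meas hx_L2 hx_mean j C hjC hmc f hf).1
    filter_upwards [this] with ω hω
    simpa using hω
  · rintro ⟨f, hf⟩
    obtain ⟨-, hmin⟩ := screening_core x hx_meas hx_L2 hx_mean j C hjC hmc f hf
    exact ⟨_, hmin, by funext t; simp [hk]⟩
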